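/- Let M be a non-degenerate even lattice and N an overlattice of M. Then l(A_N) ≥ l(A_M) − 2·l(N/M), where l denotes the minimal number of generators of a finite abelian group. -/

import Mathlib

/-- The minimal number of generators of an (additive) abelian group. -/
noncomputable def minGen (A : Type) [AddCommGroup A] : ℕ :=
  sInf {n | ∃ s : Finset A, s.card = n ∧ AddSubgroup.closure (s : Set A) = ⊤}

lemma minGen_eq_rank (A : Type) [AddCommGroup A] [AddGroup.FG A] :
    minGen A = AddGroup.rank A := by
  apply le_antisymm
  · obtain ⟨s, h1, h2⟩ := AddGroup.rank_spec A
    exact Nat.sInf_le ⟨s, h1, h2⟩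
  · have hne : {n | ∃ s : Finset A, s.card = n ∧ AddSubgroup.closure (s : Set A) = ⊤}.Nonempty := by
      obtain ⟨s, _, h2⟩ := AddGroup.rank_spec A
      exact ⟨s.card, s, rfl, h2⟩
    obtain ⟨s, h1, h2⟩ := Nat.sInf_mem hne
    rw [minGen, ← h1]
    exact AddGroup.rank_le h2

lemma minGen_le_of_surjective {A B : Type} [AddCommGroup A] [AddCommGroup B]
    [AddGroup.FG A] (f : A →+ B) (hf : Function.Surjective f) :
    minGen B ≤ minGen A := by
  have : AddGroup.FG B := AddGroup.fg_of_surjective (f := f) hf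
  rw [minGen_eq_rank, minGen_eq_rank]
  exact AddGroup.rank_le_of_surjective f hf

lemma minGen_submodule_extension {G : Type} [AddCommGroup G] [Module ℤ G] (p : Submodule ℤ G)
    [AddGroup.FG ↥p] [AddGroup.FG (G ⧸ p)] :
    minGen G ≤ minGen ↥p + minGen (G ⧸ p) := by
  classical
  letI : Module ℤ ↥p := p.module
  letI : Module ℤ (G ⧸ p) := Submodule.Quotient.module p
  obtain ⟨s, hs1, hs2⟩ := AddGroup.rank_spec ↥p
  obtain ⟨t, ht1, ht2⟩ := AddGroup.rank_spec (G ⧸ p)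
  set u : Finset G := s.image p.subtype ∪ t.image Quotient.out with hu
  have hout : ∀ x : G ⧸ p, p.mkQ x.out = x := by
    intro x
    exact Quotient.out_eq x
  have hgen : AddSubgroup.closure (u : Set G) = ⊤ := by
    rw [eq_top_iff]
    intro g _
    set K := AddSubgroup.closure (u : Set G) with hK
    have hHK : ∀ h ∈ p, h ∈ K := by
      intro h hh
      have h1 : (⟨h, hh⟩ : ↥p) ∈ AddSubgroup.closure (s : Set ↥p) := by rw [hs2]; trivial
      have h2 : h ∈ (AddSubgroup.closure (s : Set ↥p)).map p.subtype.toAddMonoidHom :=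
        ⟨⟨h, hh⟩, h1, rfl⟩
      rw [AddMonoidHom.map_closure] at h2
      refine AddSubgroup.closure_mono ?_ h2
      intro x hx
      simp only [hu, Finset.coe_union, Finset.coe_image]
      exact Or.inl hx
    have hmk : p.mkQ g ∈ AddSubgroup.map p.mkQ.toAddMonoidHom K := by
      have ht : (t : Set (G ⧸ p)) ⊆ (p.mkQ.toAddMonoidHom) '' (u : Set G) := by
        intro x hx
        refine ⟨x.out, ?_, hout x⟩
        simp only [hu, Finset.coe_union, Finset.coe_image]
        exact Or.inr ⟨x, hx, rfl⟩
      have hle : (⊤ : AddSubgroup (G ⧸ p)) ≤ AddSubgroup.map p.mkQ.toAddMonoidHom K := by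
        rw [← ht2, hK, AddMonoidHom.map_closure]
        exact AddSubgroup.closure_mono ht
      exact hle trivial
    obtain ⟨k, hk, hkg⟩ := hmk
    have hmem : k - g ∈ p := by
      have h3 : (Submodule.Quotient.mk k : G ⧸ p) = Submodule.Quotient.mk g := hkg
      exact (Submodule.Quotient.eq p).mp h3
    have hg : g = k - (k - g) := by abel
    rw [hg]
    exact K.sub_mem hk (hHK _ hmem)
  calc minGen G ≤ u.card := Nat.sInf_le ⟨u, rfl, hgen⟩
    _ ≤ s.card + t.card :=
        (Finset.card_union_le _ _).trans (by gcongr <;> exact Finset.card_image_le)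
    _ = minGen ↥p + minGen (G ⧸ p) := by
        rw [hs1, ht1, minGen_eq_rank, minGen_eq_rank]

set_option maxHeartbeats 2000000 in
/-- For a non-degenerate even lattice `M` and an overlattice `N` of `M`,
one has `l(A_N) ≥ l(A_M) − 2·l(N/M)`, where `l` is the minimal number of generators.
Here `M` is realized as a finite-index submodule of `N` with the restricted form `BM`,
and discriminant groups as duals modulo the image of the form. -/
theorem stmt_7 (N : Type) [AddCommGroup N] [Module ℤ N]
    [Module.Free ℤ N] [Module.Finite ℤ N]
    (B : N →ₗ[ℤ] N →ₗ[ℤ] ℤ)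
    (hsymm : ∀ x y, B x y = B y x)
    (hnd : ∀ x, (∀ y, B x y = 0) → x = 0)
    (heven : ∀ x, 2 ∣ B x x)
    (M : Submodule ℤ N)
    (hfin : Finite (N ⧸ M))
    (BM : ↥M →ₗ[ℤ] ↥M →ₗ[ℤ] ℤ)
    (hBM : ∀ x y : ↥M, BM x y = B x y) :
    minGen ((↥M →ₗ[ℤ] ℤ) ⧸ LinearMap.range BM) ≤
      minGen ((N →ₗ[ℤ] ℤ) ⧸ LinearMap.range B) + 2 * minGen (N ⧸ M) := by
  classical
  haveI hsub : Subsingleton (Module ℤ ↥M) :=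
    @Unique.instSubsingleton _ AddCommGroup.uniqueIntModule
  have hmodeq : (AddCommGroup.toIntModule ↥M) = M.module := Subsingleton.elim _ _
  revert BM hBM
  rw [hmodeq]
  intro BM hBM
  letI instM : Module ℤ ↥M := M.module
  letI instQNM : Module ℤ (N ⧸ M) := Submodule.Quotient.module M
  -- Smith normal form (also provides free/finite instances for M)
  set b := Module.Free.chooseBasis ℤ N with hb
  obtain ⟨n, snf⟩ := M.smithNormalForm b
  haveI hMfin := Module.Finite.of_basis snf.bN
  haveI hMfree := Module.Free.of_basis snf.bN
  haveI hFGDM := Module.Finite.iff_addGroup_fg.mp (Module.Finite.of_basis snf.bN.dualBasis)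
  haveI hFGDN : AddGroup.FG (N →ₗ[ℤ] ℤ) := Module.Finite.iff_addGroup_fg.mp inferInstance
  -- the maps
  set θ := B.compl₂ M.subtype with hθ
  set r := LinearMap.lcomp ℤ ℤ M.subtype with hr
  have hrB : ∀ n : N, r (B n) = θ n := fun n => rfl
  have hθM : ∀ m : ↥M, θ (m : N) = BM m := by
    intro m; ext x
    simp only [hθ, LinearMap.compl₂_apply, Submodule.coe_subtype]
    exact (hBM m x).symm
  set P0 := LinearMap.range BM with hP0
  letI instG := Submodule.Quotient.module P0
  set ν := P0.mkQ ∘ₗ θ with hν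
  set Q1 := LinearMap.range ν with hQ1
  letI instG2 := Submodule.Quotient.module Q1
  -- Step 2 : surjection (N ⧸ M) → Q1
  have hkerν : M ≤ LinearMap.ker ν.rangeRestrict := by
    intro m hm
    have h0 : ν m = 0 := by
      simp only [hν, LinearMap.comp_apply, Submodule.mkQ_apply]
      rw [hθM ⟨m, hm⟩, Submodule.Quotient.mk_eq_zero]
      exact ⟨⟨m, hm⟩, rfl⟩
    simp only [LinearMap.mem_ker]
    exact Subtype.ext (by simpa using h0)
  have hQ1surj : Function.Surjective (M.liftQ ν.rangeRestrict hkerν) := by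
    intro x
    obtain ⟨n, hn⟩ := ν.surjective_rangeRestrict x
    exact ⟨Submodule.Quotient.mk n, hn⟩
  haveI hFGQ1 : AddGroup.FG ↥Q1 :=
    AddGroup.fg_of_surjective (f := (M.liftQ ν.rangeRestrict hkerν).toAddMonoidHom) hQ1surj
  have step2 : minGen ↥Q1 ≤ minGen (N ⧸ M) :=
    minGen_le_of_surjective (M.liftQ ν.rangeRestrict hkerν).toAddMonoidHom hQ1surj
  -- Step 3/4 : the middle subquotient
  set ρ := Q1.mkQ ∘ₗ P0.mkQ ∘ₗ r with hρ
  set J := LinearMap.range ρ with hJ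
  letI instG3 := Submodule.Quotient.module J
  have hkerρ : LinearMap.range B ≤ LinearMap.ker ρ.rangeRestrict := by
    rintro _ ⟨n, rfl⟩
    have h0 : ρ (B n) = 0 := by
      simp only [hρ, LinearMap.comp_apply, hrB n, Submodule.mkQ_apply,
        Submodule.Quotient.mk_eq_zero]
      exact ⟨n, rfl⟩
    simp only [LinearMap.mem_ker]
    exact Subtype.ext (by simpa using h0)
  have hJsurj : Function.Surjective ((LinearMap.range B).liftQ ρ.rangeRestrict hkerρ) := by
    intro x
    obtain ⟨f, hf⟩ := ρ.surjective_rangeRestrict x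
    exact ⟨Submodule.Quotient.mk f, hf⟩
  haveI hFGAN : AddGroup.FG ((N →ₗ[ℤ] ℤ) ⧸ LinearMap.range B) :=
    AddGroup.fg_of_surjective (f := (LinearMap.range B).mkQ.toAddMonoidHom)
      (Submodule.mkQ_surjective _)
  haveI hFGJ : AddGroup.FG ↥J :=
    AddGroup.fg_of_surjective
      (f := ((LinearMap.range B).liftQ ρ.rangeRestrict hkerρ).toAddMonoidHom) hJsurj
  have step4 : minGen ↥J ≤ minGen ((N →ₗ[ℤ] ℤ) ⧸ LinearMap.range B) :=
    minGen_le_of_surjective ((LinearMap.range B).liftQ ρ.rangeRestrict hkerρ).toAddMonoidHom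
      hJsurj
  -- Step 5
  have hfsurj : Function.Surjective snf.f := by
    intro j
    by_contra hj
    have hj' : j ∉ Set.range snf.f := by simpa using hj
    have hMc : M ≤ LinearMap.ker (snf.bM.coord j) := snf.le_ker_coord_of_notMem_range hj'
    have hsurj : Function.Surjective (M.liftQ (snf.bM.coord j) hMc) := by
      intro z
      refine ⟨Submodule.Quotient.mk (z • snf.bM j), ?_⟩
      simp [Submodule.liftQ_apply]
    have : Finite ℤ := Finite.of_surjective _ hsurj
    exact not_finite ℤ
  set e : Fin n ≃ _ := Equiv.ofBijective snf.f ⟨snf.f.injective, hfsurj⟩ with he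
  set ψ := snf.bM.equiv snf.bN.dualBasis e.symm with hψ
  have hesymm : ∀ i : Fin n, e.symm (snf.f i) = i := by
    intro i
    rw [Equiv.symm_apply_eq]
    rfl
  have key : ∀ i : Fin n, ψ ((snf.bN i : N)) ∈ LinearMap.range r := by
    intro i
    refine ⟨snf.bM.dualBasis (snf.f i), ?_⟩
    have h1 : ψ ((snf.bN i : N)) = snf.a i • snf.bN.dualBasis i := by
      rw [snf.snf i, LinearEquiv.map_smul ψ (snf.a i) (snf.bM (snf.f i))]
      congr 1
      rw [hψ, Module.Basis.equiv_apply, hesymm]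
    rw [h1]
    apply snf.bN.ext
    intro k
    simp only [hr, LinearMap.lcomp_apply, LinearMap.smul_apply, smul_eq_mul]
    rw [Submodule.coe_subtype, snf.snf k,
      LinearMap.map_smul (snf.bM.dualBasis (snf.f i)) (snf.a k) (snf.bM (snf.f k)),
      Module.Basis.dualBasis_apply_self, Module.Basis.dualBasis_apply_self, smul_eq_mul]
    by_cases hik : k = i
    · subst hik; simp
    · have hfik : ¬ (snf.f k = snf.f i) := fun h => hik (snf.f.injective h)
      simp [hik, hfik]
  have hψM : ∀ m : ↥M, ψ (m : N) ∈ LinearMap.range r := by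
    have hle : (⊤ : Submodule ℤ ↥M) ≤
        (LinearMap.range r).comap ((ψ : N →ₗ[ℤ] _) ∘ₗ M.subtype) := by
      rw [← snf.bN.span_eq, Submodule.span_le]
      rintro _ ⟨i, rfl⟩
      exact key i
    intro m
    exact hle Submodule.mem_top
  set π := J.mkQ ∘ₗ Q1.mkQ ∘ₗ P0.mkQ ∘ₗ (ψ : N →ₗ[ℤ] _) with hπ
  have hkerπ : M ≤ LinearMap.ker π := by
    intro m hm
    obtain ⟨f, hf⟩ := hψM ⟨m, hm⟩
    simp only [LinearMap.mem_ker, hπ, LinearMap.comp_apply, LinearEquiv.coe_coe]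
    rw [show ψ m = r f from hf.symm]
    rw [Submodule.mkQ_apply, Submodule.mkQ_apply, Submodule.mkQ_apply,
      Submodule.Quotient.mk_eq_zero]
    exact ⟨f, rfl⟩
  have hπsurj : Function.Surjective (M.liftQ π hkerπ) := by
    intro x
    have hsurjπ : Function.Surjective π := by
      simp only [hπ, LinearMap.coe_comp, LinearEquiv.coe_coe]
      exact (Submodule.mkQ_surjective _).comp ((Submodule.mkQ_surjective _).comp
        ((Submodule.mkQ_surjective _).comp ψ.surjective))
    obtain ⟨y, hy⟩ := hsurjπ x
    exact ⟨Submodule.Quotient.mk y, hy⟩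
  have step5 := minGen_le_of_surjective (M.liftQ π hkerπ).toAddMonoidHom hπsurj
  -- assemble
  haveI hFGG2 : AddGroup.FG ((_ ⧸ P0) ⧸ Q1) :=
    AddGroup.fg_of_surjective (f := (Q1.mkQ ∘ₗ P0.mkQ).toAddMonoidHom)
      ((Submodule.mkQ_surjective _).comp (Submodule.mkQ_surjective _))
  haveI hFGG3 : AddGroup.FG (((_ ⧸ P0) ⧸ Q1) ⧸ J) :=
    AddGroup.fg_of_surjective (f := J.mkQ.toAddMonoidHom) (Submodule.mkQ_surjective _)
  have ext1 := minGen_submodule_extension Q1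
  have ext2 := minGen_submodule_extension J
  omega
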